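/- For every integer k ≥ 2 and every positive integer n, one has f_{(id,k)}(n) = Σ φ(a)·τ_k(b), where the sum runs over all pairs (a, b) of positive integers with a^k·b = n, and φ is Euler's totient function. -/
import Mathlib

open Finset

/-- The set of ordered `k`-tuples of positive integers whose product is `n`. -/
def piltzTuples (k n : ℕ) : Finset (Fin k → ℕ) :=
  (Fintype.piFinset fun _ => n.divisors).filter fun d => ∏ i, d i = n

/-- The Piltz divisor function `τ_k(n)`: the number of ordered `k`-tuples of positive
integers with product `n`. -/
def piltzTau (k n : ℕ) : ℕ := (piltzTuples k n).card

/-- `f_{(g,k)}(n) = ∑_{d₁⋯d_k = n} g(gcd(d₁,…,d_k))` (ℕ-valued version). -/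
def fgkNat (g : ℕ → ℕ) (k n : ℕ) : ℕ :=
  ∑ d ∈ piltzTuples k n, g (Finset.univ.gcd d)

lemma mem_piltz {k n : ℕ} (hn : n ≠ 0) {d : Fin k → ℕ} :
    d ∈ piltzTuples k n ↔ ∏ i, d i = n := by
  simp only [piltzTuples, mem_filter, Fintype.mem_piFinset, Nat.mem_divisors]
  refine ⟨fun h => h.2, fun h => ⟨fun i => ⟨h ▸ Finset.dvd_prod_of_mem d (mem_univ i), hn⟩, h⟩⟩

lemma card_filter_dvd (k n a : ℕ) (hn : n ≠ 0) (ha : a ≠ 0) (hd : a ^ k ∣ n) :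
    ((piltzTuples k n).filter fun d => ∀ i, a ∣ d i).card = piltzTau k (n / a ^ k) := by
  have hak : a ^ k ≠ 0 := pow_ne_zero _ ha
  have hq : n / a ^ k ≠ 0 :=
    (Nat.div_pos (Nat.le_of_dvd (Nat.pos_of_ne_zero hn) hd) (Nat.pos_of_ne_zero hak)).ne'
  refine Finset.card_bij' (fun d _ => fun i => d i / a) (fun e _ => fun i => a * e i)
    ?_ ?_ ?_ ?_
  · intro d hd'
    rw [mem_filter, mem_piltz hn] at hd'
    obtain ⟨hprod, hall⟩ := hd'
    rw [mem_piltz hq]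
    show ∏ i, d i / a = n / a ^ k
    have : a ^ k * ∏ i, d i / a = n := by
      calc a ^ k * ∏ i, d i / a = ∏ i : Fin k, (a * (d i / a)) := by
            rw [Finset.prod_mul_distrib, Finset.prod_const, card_univ, Fintype.card_fin]
        _ = ∏ i, d i := by
            refine Finset.prod_congr rfl fun i _ => Nat.mul_div_cancel' (hall i)
        _ = n := hprod
    exact (Nat.div_eq_of_eq_mul_left (Nat.pos_of_ne_zero hak)
      (by rw [← this]; ring)).symm
  · intro e he
    rw [mem_piltz hq] at he
    rw [mem_filter, mem_piltz hn]
    constructor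
    · rw [Finset.prod_mul_distrib, Finset.prod_const, card_univ, Fintype.card_fin, he,
        Nat.mul_div_cancel' hd]
    · exact fun i => Dvd.intro _ rfl
  · intro d hd'
    rw [mem_filter] at hd'
    funext i
    exact Nat.mul_div_cancel' (hd'.2 i)
  · intro e _
    funext i
    exact Nat.mul_div_cancel_left _ (Nat.pos_of_ne_zero ha)

theorem stmt7 (k : ℕ) (hk : 2 ≤ k) (n : ℕ) (hn : 0 < n) :
    fgkNat (fun m => m) k n =
      ∑ p ∈ (n.divisors ×ˢ n.divisors).filter fun p => p.1 ^ k * p.2 = n,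
        Nat.totient p.1 * piltzTau k p.2 := by
  have hn0 : n ≠ 0 := hn.ne'
  -- RHS as sum over a
  have hRHS : (∑ p ∈ (n.divisors ×ˢ n.divisors).filter fun p => p.1 ^ k * p.2 = n,
        Nat.totient p.1 * piltzTau k p.2) =
      ∑ a ∈ n.divisors.filter fun a => a ^ k ∣ n,
        Nat.totient a * piltzTau k (n / a ^ k) := by
    refine Finset.sum_nbij' (fun p => p.1) (fun a => (a, n / a ^ k)) ?_ ?_ ?_ ?_ ?_
    · intro p hp
      simp only [mem_filter, mem_product, Nat.mem_divisors] at hp ⊢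
      exact ⟨hp.1.1, ⟨p.2, hp.2.symm⟩⟩
    · intro a ha
      simp only [mem_filter, Finset.mem_product, Nat.mem_divisors] at ha ⊢
      refine ⟨⟨ha.1, ⟨Nat.div_dvd_of_dvd ha.2, hn0⟩⟩, Nat.mul_div_cancel' ha.2⟩
    · intro p hp
      simp only [mem_filter, mem_product, Nat.mem_divisors] at hp
      have hpk : 0 < p.1 ^ k := by
        rcases Nat.eq_zero_or_pos (p.1 ^ k) with h0 | h0
        · exfalso; rw [h0, zero_mul] at hp; exact hn0 hp.2.symm
        · exact h0
      have : p.2 = n / p.1 ^ k :=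
        (Nat.div_eq_of_eq_mul_left hpk (by rw [← hp.2]; ring)).symm
      exact Prod.ext rfl this.symm
    · intro a _; rfl
    · intro p hp
      simp only [mem_filter, mem_product, Nat.mem_divisors] at hp
      have hpk : 0 < p.1 ^ k := by
        rcases Nat.eq_zero_or_pos (p.1 ^ k) with h0 | h0
        · exfalso; rw [h0, zero_mul] at hp; exact hn0 hp.2.symm
        · exact h0
      have : p.2 = n / p.1 ^ k :=
        (Nat.div_eq_of_eq_mul_left hpk (by rw [← hp.2]; ring)).symm
      rw [this]
  rw [hRHS]
  -- LHS
  unfold fgkNat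
  have step1 : ∀ d ∈ piltzTuples k n,
      (Finset.univ.gcd d : ℕ) = ∑ a ∈ n.divisors, if a ∣ Finset.univ.gcd d then a.totient else 0 := by
    intro d hd
    have hg : Finset.univ.gcd d ∣ n := by
      rw [mem_piltz hn0] at hd
      have hk0 : (⟨0, by omega⟩ : Fin k) ∈ (univ : Finset (Fin k)) := mem_univ _
      calc Finset.univ.gcd d ∣ d ⟨0, by omega⟩ := Finset.gcd_dvd hk0
        _ ∣ n := hd ▸ Finset.dvd_prod_of_mem d (mem_univ _)
    conv_lhs => rw [← Nat.sum_totient (Finset.univ.gcd d)]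
    rw [← Finset.sum_filter]
    congr 1
    ext a
    simp only [Nat.mem_divisors, mem_filter]
    constructor
    · exact fun h => ⟨⟨h.1.trans hg, hn0⟩, h.1⟩
    · rintro ⟨⟨_, _⟩, h⟩
      refine ⟨h, fun h0 => hn0 (by simpa [h0] using hg)⟩
  rw [Finset.sum_congr rfl step1, Finset.sum_comm]
  have step2 : ∀ a ∈ n.divisors,
      (∑ d ∈ piltzTuples k n, if a ∣ Finset.univ.gcd d then a.totient else 0) =
      a.totient * ((piltzTuples k n).filter fun d => ∀ i, a ∣ d i).card := by
    intro a ha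
    rw [← Finset.sum_filter]
    have : ((piltzTuples k n).filter fun d => a ∣ Finset.univ.gcd d) =
        (piltzTuples k n).filter fun d => ∀ i, a ∣ d i := by
      apply Finset.filter_congr
      intro d _
      simp [Finset.dvd_gcd_iff]
    rw [this, Finset.sum_const, smul_eq_mul, mul_comm]
  rw [Finset.sum_congr rfl step2]
  rw [← Finset.sum_filter_add_sum_filter_not n.divisors (fun a => a ^ k ∣ n)]
  have hzero : ∑ a ∈ n.divisors.filter fun a => ¬ a ^ k ∣ n,
      a.totient * ((piltzTuples k n).filter fun d => ∀ i, a ∣ d i).card = 0 := by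
    refine Finset.sum_eq_zero fun a ha => ?_
    simp only [mem_filter] at ha
    have : ((piltzTuples k n).filter fun d => ∀ i, a ∣ d i) = ∅ := by
      rw [Finset.filter_eq_empty_iff]
      intro d hd hall
      rw [mem_piltz hn0] at hd
      exact ha.2 (by
        have : a ^ k ∣ ∏ i, d i := by
          calc a ^ k = ∏ _i : Fin k, a := by
                rw [Finset.prod_const, card_univ, Fintype.card_fin]
            _ ∣ ∏ i, d i := Finset.prod_dvd_prod_of_dvd _ _ (fun i _ => hall i)
        exact hd ▸ this)
    rw [this]; simp
  rw [hzero, add_zero]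
  refine Finset.sum_congr rfl fun a ha => ?_
  simp only [mem_filter, Nat.mem_divisors] at ha
  have ha0 : a ≠ 0 := by
    rintro rfl
    exact hn0 (Nat.eq_zero_of_zero_dvd ha.1.1)
  rw [card_filter_dvd k n a hn0 ha0 ha.2]
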